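/- Suppose p_max < 1 and every B ∈ 𝓑 satisfies Σ_{A ∈ Γ(B)} p(A) ≤ 1/4. Then the Shearer criterion is satisfied, and α(B) ≤ 4 for every non-isolated B ∈ 𝓑. -/

import Mathlib

open scoped ENNReal BigOperators Classical

noncomputable section

variable {β : Type*}

/-- A set of bad-events is stable if no two distinct members are dependent. -/
def IsStable (dep : β → β → Prop) (I : Finset β) : Prop :=
  ∀ A ∈ I, ∀ B ∈ I, A ≠ B → ¬ dep A B

/-- Inclusive neighborhood Γ̄(B) = Γ(B) ∪ {B}. -/
def inclNbhd [Fintype β] (dep : β → β → Prop) (B : β) : Finset β :=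
  Finset.univ.filter fun A => A = B ∨ dep A B

/-- Neighborhood Γ(B). -/
def nbhd [Fintype β] (dep : β → β → Prop) (B : β) : Finset β :=
  Finset.univ.filter fun A => A ≠ B ∧ dep A B

/-- stab(I): all stable subsets of ⋃_{B ∈ I} Γ̄(B). -/
def stab [Fintype β] (dep : β → β → Prop) (I : Finset β) : Finset (Finset β) :=
  Finset.univ.filter fun J => IsStable dep J ∧ J ⊆ I.biUnion (inclNbhd dep)

/-- A stable-set sequence rooted at `I`. -/
structure StableSeq [Fintype β] (dep : β → β → Prop) (I : Finset β) where
  seq : ℕ → Finset β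
  root : seq 0 = I
  stable : ∀ i, IsStable dep (seq i)
  step : ∀ i, seq (i + 1) ∈ stab dep (seq i)
  fin : ∃ ℓ, seq ℓ = ∅

/-- The depth of a stable-set sequence: the least ℓ with S_ℓ = ∅. -/
def StableSeq.depth [Fintype β] {dep : β → β → Prop} {I : Finset β}
    (S : StableSeq dep I) : ℕ :=
  Nat.find S.fin

/-- The weight Π_i p(S_i) of a stable-set sequence. -/
def StableSeq.weight [Fintype β] {dep : β → β → Prop} {I : Finset β}
    (p : β → ℝ≥0∞) (S : StableSeq dep I) : ℝ≥0∞ :=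
  ∏ i ∈ Finset.range S.depth, ∏ B ∈ S.seq i, p B

/-- μ(I): total weight of all stable-set sequences rooted at I. -/
def mu [Fintype β] (dep : β → β → Prop) (p : β → ℝ≥0∞) (I : Finset β) : ℝ≥0∞ :=
  ∑' S : StableSeq dep I, S.weight p

/-- μ^{(h)}(I): total weight of stable-set sequences rooted at I of depth ≤ h. -/
def muD [Fintype β] (dep : β → β → Prop) (p : β → ℝ≥0∞) (I : Finset β) (h : ℕ) : ℝ≥0∞ :=
  ∑' S : {S : StableSeq dep I // S.depth ≤ h}, S.1.weight p

/-- α(B) = Σ_{J ∈ stab(B)} μ(J). -/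
def alphaB [Fintype β] (dep : β → β → Prop) (p : β → ℝ≥0∞) (B : β) : ℝ≥0∞ :=
  ∑ J ∈ stab dep {B}, mu dep p J

/-- The Shearer criterion: μ(B) < ∞ for all bad-events B. -/
def ShearerCrit [Fintype β] (dep : β → β → Prop) (p : β → ℝ≥0∞) : Prop :=
  ∀ B : β, mu dep p {B} < ⊤

section basics
variable [Fintype β] {dep : β → β → Prop} {p : β → ℝ≥0∞}

lemma mem_stab {I J : Finset β} :
    J ∈ stab dep I ↔ IsStable dep J ∧ J ⊆ I.biUnion (inclNbhd dep) := by
  simp [stab]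

lemma stab_empty_eq {J : Finset β} (h : J ∈ stab dep (∅ : Finset β)) : J = ∅ := by
  rw [mem_stab] at h
  simpa using Finset.subset_empty.mp (by simpa using h.2)

lemma StableSeq.ext' {I : Finset β} {S T : StableSeq dep I} (h : S.seq = T.seq) : S = T := by
  cases S; cases T; simpa using h

lemma seq_succ_of_empty {I : Finset β} (S : StableSeq dep I) {i : ℕ}
    (h : S.seq i = ∅) : S.seq (i + 1) = ∅ := by
  have hs := S.step i
  rw [h] at hs
  exact stab_empty_eq hs

lemma seq_of_root_empty (S : StableSeq dep (∅ : Finset β)) (i : ℕ) : S.seq i = ∅ := by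
  induction i with
  | zero => exact S.root
  | succ n ih => exact seq_succ_of_empty S ih

lemma depth_root_empty (S : StableSeq dep (∅ : Finset β)) : S.depth = 0 :=
  (Nat.find_eq_zero _).mpr S.root

lemma StableSeq.depth_le {I : Finset β} (S : StableSeq dep I) {n : ℕ}
    (h : S.seq n = ∅) : S.depth ≤ n := Nat.find_le h

lemma StableSeq.depth_spec {I : Finset β} (S : StableSeq dep I) : S.seq S.depth = ∅ :=
  Nat.find_spec S.fin

lemma depth_pos {I : Finset β} (hI : I.Nonempty) (S : StableSeq dep I) : 0 < S.depth := by
  rw [pos_iff_ne_zero]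
  intro h
  have h0 : S.seq S.depth = ∅ := Nat.find_spec S.fin
  rw [h, S.root] at h0
  exact hI.ne_empty h0

def StableSeq.tail {I : Finset β} (S : StableSeq dep I) : StableSeq dep (S.seq 1) where
  seq := fun i => S.seq (i + 1)
  root := rfl
  stable := fun i => S.stable (i + 1)
  step := fun i => S.step (i + 1)
  fin := by
    obtain ⟨ℓ, hℓ⟩ := S.fin
    exact ⟨ℓ, seq_succ_of_empty S hℓ⟩

lemma StableSeq.tail_mem {I : Finset β} (S : StableSeq dep I) : S.seq 1 ∈ stab dep I := by
  have := S.step 0; rwa [S.root] at this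

lemma tail_depth {I : Finset β} (hI : I.Nonempty) (S : StableSeq dep I) :
    S.tail.depth + 1 = S.depth := by
  have h1 : 0 < S.depth := depth_pos hI S
  refine le_antisymm ?_ ?_
  · have h2 : S.tail.seq (S.depth - 1) = ∅ := by
      show S.seq (S.depth - 1 + 1) = ∅
      have e : S.depth - 1 + 1 = S.depth := by omega
      rw [e]
      exact S.depth_spec
    have := S.tail.depth_le h2
    omega
  · exact S.depth_le S.tail.depth_spec

lemma tail_weight {I : Finset β} (hI : I.Nonempty) (S : StableSeq dep I) :
    S.weight p = (∏ B ∈ I, p B) * S.tail.weight p := by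
  unfold StableSeq.weight
  rw [← tail_depth hI S, Finset.prod_range_succ']
  rw [S.root, mul_comm]
  rfl

lemma muD_succ_le {I : Finset β} (hI : I.Nonempty) (h : ℕ) :
    muD dep p I (h + 1) ≤ (∏ B ∈ I, p B) * ∑ J ∈ stab dep I, muD dep p J h := by
  classical
  set Φ : {S : StableSeq dep I // S.depth ≤ h + 1} →
      (J : {J // J ∈ stab dep I}) × {S' : StableSeq dep J.1 // S'.depth ≤ h} :=
    fun S => ⟨⟨S.1.seq 1, S.1.tail_mem⟩, ⟨S.1.tail, by
      have := tail_depth hI S.1; have := S.2; omega⟩⟩ with hΦ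
  have hinj : Function.Injective Φ := by
    rintro ⟨S, hS⟩ ⟨T, hT⟩ hST
    have h2 : S.tail.seq = T.tail.seq :=
      congrArg (fun x : (J : {J // J ∈ stab dep I}) ×
        {S' : StableSeq dep J.1 // S'.depth ≤ h} => x.2.1.seq) hST
    refine Subtype.ext (StableSeq.ext' ?_)
    funext i
    cases i with
    | zero => rw [S.root, T.root]
    | succ n => exact congrFun h2 n
  have key : muD dep p I (h + 1) ≤
      ∑' x : (J : {J // J ∈ stab dep I}) × {S' : StableSeq dep J.1 // S'.depth ≤ h},
        (∏ B ∈ I, p B) * x.2.1.weight p := by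
    rw [muD]
    have : ∀ S : {S : StableSeq dep I // S.depth ≤ h + 1},
        S.1.weight p = (∏ B ∈ I, p B) * (Φ S).2.1.weight p := fun S => tail_weight hI S.1
    rw [tsum_congr this]
    exact ENNReal.tsum_comp_le_tsum_of_injective hinj _
  refine key.trans (le_of_eq ?_)
  rw [ENNReal.tsum_sigma']
  calc ∑' (a : {J // J ∈ stab dep I}), ∑' (b : {S' : StableSeq dep a.1 // S'.depth ≤ h}),
        (∏ B ∈ I, p B) * b.1.weight p
      = ∑' (a : {J // J ∈ stab dep I}), (∏ B ∈ I, p B) * muD dep p a.1 h := by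
        exact tsum_congr fun a => ENNReal.tsum_mul_left
    _ = (∏ B ∈ I, p B) * ∑' (a : {J // J ∈ stab dep I}), muD dep p a.1 h :=
        ENNReal.tsum_mul_left
    _ = _ := congrArg _ (Finset.tsum_subtype (stab dep I) (fun J => muD dep p J h))

end basics
section more
variable [Fintype β] {dep : β → β → Prop} {p : β → ℝ≥0∞}

lemma muD_empty_le (h : ℕ) : muD dep p (∅ : Finset β) h ≤ 1 := by
  classical
  have hsub : Subsingleton {S : StableSeq dep (∅ : Finset β) // S.depth ≤ h} := by
    constructor
    rintro ⟨S, _⟩ ⟨T, _⟩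
    refine Subtype.ext (StableSeq.ext' ?_)
    funext i
    rw [seq_of_root_empty S i, seq_of_root_empty T i]
  rcases isEmpty_or_nonempty {S : StableSeq dep (∅ : Finset β) // S.depth ≤ h} with he | hn
  · rw [muD, tsum_empty]; exact zero_le_one
  · obtain ⟨a⟩ := hn
    rw [muD, tsum_eq_single a (fun b hb => absurd (Subsingleton.elim b a) hb)]
    rw [StableSeq.weight, depth_root_empty a.1]
    simp

lemma muD_zero_le (I : Finset β) (hI : I.Nonempty) : muD dep p I 0 = 0 := by
  have : IsEmpty {S : StableSeq dep I // S.depth ≤ 0} := by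
    constructor
    rintro ⟨S, hS⟩
    exact Nat.lt_irrefl 0 (lt_of_lt_of_le (depth_pos hI S) hS)
  rw [muD, tsum_empty]

lemma prod_biUnion_le (s : Finset β) (t : β → Finset β) (f : β → ℝ≥0∞)
    (hf : ∀ a, 1 ≤ f a) : ∏ A ∈ s.biUnion t, f A ≤ ∏ B ∈ s, ∏ A ∈ t B, f A := by
  classical
  induction s using Finset.cons_induction with
  | empty => simp
  | cons a s ha ih =>
    rw [Finset.cons_eq_insert, Finset.biUnion_insert, Finset.prod_insert ha]
    calc ∏ A ∈ t a ∪ s.biUnion t, f A ≤ (∏ A ∈ t a, f A) * ∏ A ∈ s.biUnion t, f A := by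
          rw [show t a ∪ s.biUnion t = t a ∪ (s.biUnion t \ t a) by
                rw [Finset.union_sdiff_self_eq_union],
              Finset.prod_union Finset.disjoint_sdiff]
          refine mul_le_mul_right ?_ _
          exact Finset.prod_le_prod_of_subset_of_one_le' (Finset.sdiff_subset)
            (fun i _ _ => hf i)
      _ ≤ _ := mul_le_mul_right ih _

end more
theorem weier {ι : Type*} (s : Finset ι) (x : ι → ℝ≥0∞) (hx : ∀ A ∈ s, x A ≤ 1) :
    1 - ∑ A ∈ s, x A ≤ ∏ A ∈ s, (1 - x A) := by
  classical
  induction s using Finset.cons_induction with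
  | empty => simp
  | cons a s ha ih =>
    rw [Finset.sum_cons, Finset.prod_cons]
    have hxa : x a ≤ 1 := hx a (Finset.mem_cons_self a s)
    have ih' := ih fun A hA => hx A (Finset.mem_cons_of_mem hA)
    set S := ∑ A ∈ s, x A with hS
    calc 1 - (x a + S) ≤ (1 - x a) * (1 - S) := by
          rw [tsub_le_iff_right]
          calc (1:ℝ≥0∞) ≤ (1 - S) + S := le_tsub_add
            _ = ((1 - x a) + x a) * (1 - S) + S := by
                rw [tsub_add_cancel_of_le hxa, one_mul]
            _ = (1 - x a) * (1 - S) + x a * (1 - S) + S := by ring_nf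
            _ ≤ (1 - x a) * (1 - S) + x a * 1 + S := by
                gcongr; exact tsub_le_self
            _ = (1 - x a) * (1 - S) + (x a + S) := by rw [mul_one, add_assoc]
      _ ≤ (1 - x a) * ∏ A ∈ s, (1 - x A) := mul_le_mul_right ih' _

section main
variable [Fintype β] {dep : β → β → Prop} {p : β → ℝ≥0∞}

lemma muD_le_prod (c : β → ℝ≥0∞)
    (hV : ∀ B, p B * ∏ A ∈ inclNbhd dep B, (c A + 1) ≤ c B) :
    ∀ (h : ℕ) (I : Finset β), muD dep p I h ≤ ∏ B ∈ I, c B := by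
  intro h
  induction h with
  | zero =>
    intro I
    rcases I.eq_empty_or_nonempty with rfl | hI
    · simpa using muD_empty_le (dep := dep) (p := p) 0
    · rw [muD_zero_le I hI]; exact zero_le
  | succ n ih =>
    intro I
    rcases I.eq_empty_or_nonempty with rfl | hI
    · simpa using muD_empty_le (dep := dep) (p := p) (n + 1)
    calc muD dep p I (n + 1) ≤ (∏ B ∈ I, p B) * ∑ J ∈ stab dep I, muD dep p J n :=
          muD_succ_le hI n
      _ ≤ (∏ B ∈ I, p B) * ∑ J ∈ stab dep I, ∏ A ∈ J, c A := by
          gcongr with J hJ; exact ih J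
      _ ≤ (∏ B ∈ I, p B) * ∑ J ∈ (I.biUnion (inclNbhd dep)).powerset, ∏ A ∈ J, c A := by
          refine mul_le_mul_right ?_ _
          refine Finset.sum_le_sum_of_subset fun J hJ => ?_
          exact Finset.mem_powerset.mpr (mem_stab.mp hJ).2
      _ = (∏ B ∈ I, p B) * ∏ A ∈ I.biUnion (inclNbhd dep), (c A + 1) := by
          rw [Finset.prod_add]
          simp
      _ ≤ (∏ B ∈ I, p B) * ∏ B ∈ I, ∏ A ∈ inclNbhd dep B, (c A + 1) := by
          gcongr
          exact prod_biUnion_le I (inclNbhd dep) _ (fun a => le_add_self)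
      _ = ∏ B ∈ I, (p B * ∏ A ∈ inclNbhd dep B, (c A + 1)) := by
          rw [Finset.prod_mul_distrib]
      _ ≤ ∏ B ∈ I, c B := Finset.prod_le_prod' fun B _ => hV B

lemma mu_le_prod (c : β → ℝ≥0∞)
    (hV : ∀ B, p B * ∏ A ∈ inclNbhd dep B, (c A + 1) ≤ c B) (I : Finset β) :
    mu dep p I ≤ ∏ B ∈ I, c B := by
  classical
  rw [mu, ENNReal.tsum_eq_iSup_sum]
  refine iSup_le fun F => ?_
  set h := F.sup StableSeq.depth with hh
  calc ∑ S ∈ F, S.weight p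
      = ∑ S ∈ F, Set.indicator {S : StableSeq dep I | S.depth ≤ h} (fun S => S.weight p) S := by
        refine Finset.sum_congr rfl fun S hS => ?_
        exact (Set.indicator_of_mem
          (show S ∈ {S : StableSeq dep I | S.depth ≤ h} from Finset.le_sup (f := StableSeq.depth) hS) _).symm
    _ ≤ ∑' S : StableSeq dep I,
          Set.indicator {S : StableSeq dep I | S.depth ≤ h} (fun S => S.weight p) S :=
        ENNReal.sum_le_tsum F
    _ = muD dep p I h :=
        (tsum_subtype {S : StableSeq dep I | S.depth ≤ h} (fun S => S.weight p)).symm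
    _ ≤ ∏ B ∈ I, c B := muD_le_prod c hV h I

end main

section arith
variable [Fintype β] {dep : β → β → Prop}

lemma mem_nbhd {A B : β} : A ∈ nbhd dep B ↔ A ≠ B ∧ dep A B := by simp [nbhd]

lemma inclNbhd_eq_insert (B : β) : inclNbhd dep B = insert B (nbhd dep B) := by
  ext A
  simp only [inclNbhd, nbhd, Finset.mem_filter, Finset.mem_univ, true_and, Finset.mem_insert]
  tauto

lemma not_mem_nbhd_self (B : β) : B ∉ nbhd dep B := by simp [nbhd]

example : (1 - 2⁻¹ : ℝ≥0∞) = 2⁻¹ := ENNReal.one_sub_inv_two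
lemma two_mul_quarter : 2 * (1/4 : ℝ≥0∞) = 2⁻¹ := by
  rw [one_div, show (4:ℝ≥0∞) = 2 * 2 by norm_num,
    ENNReal.mul_inv (by norm_num) (by norm_num), ← mul_assoc,
    ENNReal.mul_inv_cancel (by norm_num) (by norm_num), one_mul]
example {a b : ℝ≥0∞} : a⁻¹ ≤ b⁻¹ ↔ b ≤ a := ENNReal.inv_le_inv

end arith

/-- if p_max < 1 and Σ_{A ∈ Γ(B)} p(A) ≤ 1/4 for all B, then the
Shearer criterion holds and α(B) ≤ 4 for every non-isolated B. -/
theorem quarter_criterion_implies_Shearer [Fintype β] (dep : β → β → Prop)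
    (hsym : Symmetric dep) (p : β → ℝ≥0∞) (pmax : ℝ≥0∞)
    (hp : ∀ B, p B ≤ pmax) (hpmax : pmax < 1)
    (hcrit : ∀ B : β, ∑ A ∈ nbhd dep B, p A ≤ 1 / 4) :
    ShearerCrit dep p ∧
      ∀ B : β, (nbhd dep B).Nonempty → alphaB dep p B ≤ 4 := by
  classical
  have hp1 : ∀ B, p B < 1 := fun B => lt_of_le_of_lt (hp B) hpmax
  have hp4 : ∀ B, (nbhd dep B).Nonempty → p B ≤ 1 / 4 := by
    rintro B ⟨A, hA⟩
    rw [mem_nbhd] at hA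
    have hB : B ∈ nbhd dep A := mem_nbhd.mpr ⟨fun e => hA.1 e.symm, hsym hA.2⟩
    exact le_trans (Finset.single_le_sum (f := p) (fun _ _ => zero_le) hB) (hcrit A)
  set q : β → ℝ≥0∞ := fun B => if (nbhd dep B).Nonempty then 2 * p B else p B with hq
  set c : β → ℝ≥0∞ := fun B => q B * (1 - q B)⁻¹ with hc
  have hqeq : ∀ B, (nbhd dep B).Nonempty → q B = 2 * p B := by
    intro B hB; rw [hq]; simp only [if_pos hB]
  have hqhalf : ∀ B, (nbhd dep B).Nonempty → q B ≤ 2⁻¹ := by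
    intro B hB
    rw [hqeq B hB]
    calc 2 * p B ≤ 2 * (1 / 4) := by gcongr; exact hp4 B hB
      _ = 2⁻¹ := two_mul_quarter
  have hqlt : ∀ B, q B < 1 := by
    intro B
    by_cases hB : (nbhd dep B).Nonempty
    · refine lt_of_le_of_lt (hqhalf B hB) ?_
      exact ENNReal.inv_lt_one.mpr (by norm_num)
    · rw [hq]; simp only [if_neg hB]; exact hp1 B
  have hsub0 : ∀ B, (1 : ℝ≥0∞) - q B ≠ 0 := by
    intro B
    simpa [tsub_eq_zero_iff_le] using (hqlt B).not_ge
  have hsubtop : ∀ B, (1 : ℝ≥0∞) - q B ≠ ⊤ :=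
    fun B => (lt_of_le_of_lt tsub_le_self ENNReal.one_lt_top).ne
  have hqtop : ∀ B, q B ≠ ⊤ := fun B => (hqlt B).ne_top
  have hctop : ∀ B, c B ≠ ⊤ :=
    fun B => ENNReal.mul_ne_top (hqtop B) (ENNReal.inv_ne_top.mpr (hsub0 B))
  have hone : ∀ B, c B + 1 = (1 - q B)⁻¹ := by
    intro B
    rw [hc]
    nth_rewrite 2 [← ENNReal.mul_inv_cancel (hsub0 B) (hsubtop B)]
    rw [← add_mul, add_tsub_cancel_of_le (hqlt B).le, one_mul]
  have hprod : ∀ B, ∏ A ∈ nbhd dep B, (c A + 1) ≤ 2 := by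
    intro B
    have h1 : ∀ A ∈ nbhd dep B, c A + 1 = (1 - q A)⁻¹ := fun A _ => hone A
    have hsum : ∑ A ∈ nbhd dep B, q A ≤ 2⁻¹ := by
      have e : ∀ A ∈ nbhd dep B, q A = 2 * p A := by
        intro A hA
        rw [mem_nbhd] at hA
        exact hqeq A ⟨B, mem_nbhd.mpr ⟨fun h => hA.1 h.symm, hsym hA.2⟩⟩
      rw [Finset.sum_congr rfl e, ← Finset.mul_sum]
      calc 2 * ∑ A ∈ nbhd dep B, p A ≤ 2 * (1 / 4) := by gcongr; exact hcrit B
        _ = 2⁻¹ := two_mul_quarter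
    have h2 : 2⁻¹ ≤ ∏ A ∈ nbhd dep B, (1 - q A) := by
      calc (2⁻¹ : ℝ≥0∞) = 1 - 2⁻¹ := ENNReal.one_sub_inv_two.symm
        _ ≤ 1 - ∑ A ∈ nbhd dep B, q A := tsub_le_tsub_left hsum _
        _ ≤ _ := weier _ _ (fun A _ => (hqlt A).le)
    rw [Finset.prod_congr rfl h1,
      ← ENNReal.prod_inv_distrib (fun i _ j _ _ => Or.inr (hsubtop j))]
    calc (∏ A ∈ nbhd dep B, (1 - q A))⁻¹ ≤ (2⁻¹)⁻¹ := ENNReal.inv_le_inv.mpr h2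
      _ = 2 := by simp
  have hV : ∀ B, p B * ∏ A ∈ inclNbhd dep B, (c A + 1) ≤ c B := by
    intro B
    rw [inclNbhd_eq_insert, Finset.prod_insert (not_mem_nbhd_self B), hone B]
    by_cases hB : (nbhd dep B).Nonempty
    · calc p B * ((1 - q B)⁻¹ * ∏ A ∈ nbhd dep B, (c A + 1))
          ≤ p B * ((1 - q B)⁻¹ * 2) := mul_le_mul_right (mul_le_mul_right (hprod B) _) _
        _ = (2 * p B) * (1 - q B)⁻¹ := by ring
        _ = c B := by rw [← hqeq B hB]
    · have he : nbhd dep B = ∅ := Finset.not_nonempty_iff_eq_empty.mp hB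
      have hqB : q B = p B := by rw [hq]; simp only [if_neg hB]
      rw [he, Finset.prod_empty, mul_one, ← hqB]
  constructor
  · intro B
    have h := mu_le_prod c hV {B}
    rw [Finset.prod_singleton] at h
    exact lt_of_le_of_lt h (lt_top_iff_ne_top.mpr (hctop B))
  · intro B hB
    rw [alphaB]
    calc ∑ J ∈ stab dep {B}, mu dep p J ≤ ∑ J ∈ stab dep {B}, ∏ A ∈ J, c A :=
        Finset.sum_le_sum fun J _ => mu_le_prod c hV J
      _ ≤ ∑ J ∈ (Finset.biUnion {B} (inclNbhd dep)).powerset, ∏ A ∈ J, c A :=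
        Finset.sum_le_sum_of_subset (fun J hJ => Finset.mem_powerset.mpr (mem_stab.mp hJ).2)
      _ = ∏ A ∈ Finset.biUnion {B} (inclNbhd dep), (c A + 1) := by
          rw [Finset.prod_add]; simp
      _ = ∏ A ∈ inclNbhd dep B, (c A + 1) := by rw [Finset.singleton_biUnion]
      _ = (c B + 1) * ∏ A ∈ nbhd dep B, (c A + 1) := by
          rw [inclNbhd_eq_insert, Finset.prod_insert (not_mem_nbhd_self B)]
      _ ≤ 2 * 2 := by
          refine mul_le_mul' ?_ (hprod B)
          rw [hone B]
          calc (1 - q B)⁻¹ ≤ (2⁻¹)⁻¹ := ENNReal.inv_le_inv.mpr (by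
              calc (2⁻¹ : ℝ≥0∞) = 1 - 2⁻¹ := ENNReal.one_sub_inv_two.symm
                _ ≤ 1 - q B := tsub_le_tsub_left (hqhalf B hB) _)
            _ = 2 := by simp
      _ = 4 := by norm_num
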